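/- Define rational numbers C_p by C_0 = 1 and Σ_{q=0}^p C_{p−q}/(2q+1)! = 0 for p ≥ 1. Then for all p ≥ 0, Σ_{q=0}^p 2^{2p−2q}·C_{p−q}/(2q)! = C_p. -/

import Mathlib

open Finset

private lemma sum_range_two_mul' (f : ℕ → ℚ) (n : ℕ) :
    ∑ i ∈ range (2 * n), f i = ∑ i ∈ range n, f (2 * i) + ∑ i ∈ range n, f (2 * i + 1) := by
  induction n with
  | zero => simp
  | succ n ih =>
    have h : 2 * (n + 1) = 2 * n + 1 + 1 := by ring
    rw [h, sum_range_succ, sum_range_succ, sum_range_succ, sum_range_succ, ih]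
    ring

private lemma reflect_eq' (n : ℕ) (f g : ℕ → ℚ) (h : ∀ q ≤ n, f (n - q) = g q) :
    ∑ q ∈ range (n + 1), f q = ∑ q ∈ range (n + 1), g q := by
  rw [← sum_range_reflect]
  refine sum_congr rfl fun q hq => ?_
  have hq' : q ≤ n := Nat.lt_succ_iff.mp (mem_range.mp hq)
  have : n + 1 - 1 - q = n - q := by omega
  rw [this, h q hq']

private lemma sum_choose_odd' (m : ℕ) :
    ∑ q ∈ range (m + 1), (((2 * m + 1).choose (2 * q + 1) : ℚ)) = 4 ^ m := by
  have hEO : ∑ q ∈ range (m + 1), (((2 * m + 1).choose (2 * q) : ℚ))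
      = ∑ q ∈ range (m + 1), (((2 * m + 1).choose (2 * q + 1) : ℚ)) := by
    refine reflect_eq' m _ _ fun q hq => ?_
    congr 1
    have h1 : 2 * (m - q) = (2 * m + 1) - (2 * q + 1) := by omega
    rw [h1, Nat.choose_symm (by omega)]
  have htot : ∑ i ∈ range (2 * (m + 1)), (((2 * m + 1).choose i : ℚ)) = 2 ^ (2 * m + 1) := by
    have h := Nat.sum_range_choose (2 * m + 1)
    have h2 : 2 * (m + 1) = 2 * m + 1 + 1 := by ring
    rw [h2]
    exact_mod_cast congrArg (fun x : ℕ => (x : ℚ)) h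
  have hsplit := sum_range_two_mul' (fun i => (((2 * m + 1).choose i : ℚ))) (m + 1)
  rw [htot, hEO] at hsplit
  have h4 : (2 : ℚ) ^ (2 * m + 1) = 2 * 4 ^ m := by
    rw [pow_succ, pow_mul]; norm_num; ring
  rw [h4] at hsplit
  have := hsplit.symm
  nlinarith [this]

private lemma factorial_conv' (n : ℕ) :
    ∑ k ∈ range (n + 1),
      (1 : ℚ) / (Nat.factorial (2 * k)) * ((1 : ℚ) / (Nat.factorial (2 * (n - k) + 1)))
      = 4 ^ n / (Nat.factorial (2 * n + 1)) := by
  have key : ∀ q ≤ n, (1 : ℚ) / (Nat.factorial (2 * (n - q))) * (1 / (Nat.factorial (2 * q + 1)))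
      = ((2 * n + 1).choose (2 * q + 1) : ℚ) / (Nat.factorial (2 * n + 1)) := by
    intro q hq
    have hle : 2 * q + 1 ≤ 2 * n + 1 := by omega
    rw [Nat.cast_choose ℚ hle]
    have h1 : 2 * n + 1 - (2 * q + 1) = 2 * (n - q) := by omega
    rw [h1]
    have f1 : (Nat.factorial (2 * (n - q)) : ℚ) ≠ 0 := Nat.cast_ne_zero.2 (Nat.factorial_ne_zero _)
    have f2 : (Nat.factorial (2 * q + 1) : ℚ) ≠ 0 := Nat.cast_ne_zero.2 (Nat.factorial_ne_zero _)
    have f3 : (Nat.factorial (2 * n + 1) : ℚ) ≠ 0 := Nat.cast_ne_zero.2 (Nat.factorial_ne_zero _)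
    field_simp
  have hrefl : ∑ k ∈ range (n + 1),
      (1 : ℚ) / (Nat.factorial (2 * k)) * ((1 : ℚ) / (Nat.factorial (2 * (n - k) + 1)))
      = ∑ q ∈ range (n + 1), ((2 * n + 1).choose (2 * q + 1) : ℚ) / (Nat.factorial (2 * n + 1)) := by
    refine reflect_eq' n _ _ fun q hq => ?_
    have h2 : n - (n - q) = q := by omega
    rw [h2]; exact key q hq
  rw [hrefl, ← sum_div, sum_choose_odd']

theorem C_recursion_d (C : ℕ → ℚ) (hC0 : C 0 = 1)
    (hCrec : ∀ p : ℕ, 1 ≤ p → ∑ q ∈ Finset.range (p + 1), C (p - q) / (Nat.factorial (2 * q + 1) : ℚ) = 0) (p : ℕ) :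
    ∑ q ∈ Finset.range (p + 1), 2 ^ (2 * p - 2 * q) * C (p - q) / (Nat.factorial (2 * q) : ℚ) =
      C p := by
  classical
  set F : PowerSeries ℚ := PowerSeries.mk C with hF
  set G : PowerSeries ℚ := PowerSeries.mk (fun q => (1 : ℚ) / (Nat.factorial (2 * q + 1))) with hG
  set H : PowerSeries ℚ := PowerSeries.mk (fun q => (1 : ℚ) / (Nat.factorial (2 * q))) with hH
  set K : PowerSeries ℚ := PowerSeries.mk (fun k => (4 : ℚ) ^ k / (Nat.factorial (2 * k + 1))) with hK
  set F2 : PowerSeries ℚ := PowerSeries.mk (fun k => (4 : ℚ) ^ k * C k) with hF2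
  -- key coefficient identity
  have key : ∀ n : ℕ, ∑ k ∈ range (n + 1), C k * ((1 : ℚ) / (Nat.factorial (2 * (n - k) + 1)))
      = if n = 0 then 1 else 0 := by
    intro n
    rcases Nat.eq_zero_or_pos n with hn | hn
    · subst hn; simp [hC0, Nat.factorial]
    · have h := hCrec n hn
      rw [if_neg (by omega), ← h]
      refine reflect_eq' n _ _ fun q hq => ?_
      have h2 : n - (n - q) = q := by omega
      rw [h2]; ring
  have h1 : F * G = 1 := by
    ext n
    rw [PowerSeries.coeff_mul, Finset.Nat.sum_antidiagonal_eq_sum_range_succ_mk]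
    simp only [hF, hG, PowerSeries.coeff_mk, PowerSeries.coeff_one]
    exact key n
  have h2 : H * G = K := by
    ext n
    rw [PowerSeries.coeff_mul, Finset.Nat.sum_antidiagonal_eq_sum_range_succ_mk]
    simp only [hH, hG, hK, PowerSeries.coeff_mk]
    exact factorial_conv' n
  have h3 : F2 * K = 1 := by
    ext n
    rw [PowerSeries.coeff_mul, Finset.Nat.sum_antidiagonal_eq_sum_range_succ_mk]
    simp only [hF2, hK, PowerSeries.coeff_mk, PowerSeries.coeff_one]
    have step : ∑ k ∈ range (n + 1),
        (4 : ℚ) ^ k * C k * ((4 : ℚ) ^ (n - k) / (Nat.factorial (2 * (n - k) + 1)))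
        = 4 ^ n * ∑ k ∈ range (n + 1), C k * ((1 : ℚ) / (Nat.factorial (2 * (n - k) + 1))) := by
      rw [mul_sum]
      refine sum_congr rfl fun k hk => ?_
      have hk' : k ≤ n := Nat.lt_succ_iff.mp (mem_range.mp hk)
      have hp : (4 : ℚ) ^ k * 4 ^ (n - k) = 4 ^ n := by
        rw [← pow_add]; congr 1; omega
      rw [← hp]; ring
    rw [step, key n]
    split_ifs with h <;> simp [h]
  have hGne : G ≠ 0 := by
    intro h
    have h0 : (PowerSeries.coeff 0) G = 0 := by rw [h]; simp
    rw [hG, PowerSeries.coeff_mk] at h0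
    norm_num [Nat.factorial] at h0
  have hmain : F2 * H = F := by
    have : (F2 * H) * G = F * G := by
      rw [mul_assoc, h2, h3, h1]
    exact mul_right_cancel₀ hGne this
  have hc := congrArg (PowerSeries.coeff p) hmain
  rw [PowerSeries.coeff_mul, Finset.Nat.sum_antidiagonal_eq_sum_range_succ_mk] at hc
  simp only [hF2, hH, hF, PowerSeries.coeff_mk] at hc
  rw [← hc]
  refine (reflect_eq' p _ _ fun q hq => ?_).symm
  have h2' : p - (p - q) = q := by omega
  rw [h2']
  have h3' : (2 : ℚ) ^ (2 * p - 2 * q) = 4 ^ (p - q) := by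
    have : 2 * p - 2 * q = 2 * (p - q) := by omega
    rw [this, pow_mul]; norm_num
  rw [h3']
  field_simp
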